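/- arXiv:1511.08783 — 6 statements merged into one kernel-verified Lean document; each statement's English description precedes it below -/
import Mathlib

section
/- Let H be a weak Hopf algebra, A an algebra, e, f ∈ Hom(H,A) idempotents under convolution, u an (e,f)-invertible element of Hom(H,A), and define h · a = u(h₁) a u⁻¹(h₂). Then for all h ∈ H and a, b ∈ A: h · (ab) = (h₁ · a)(h₂ · b) if and only if f(h₁)(ab)f(h₂) = f(h₁) a f(h₂) b f(h₃) for all h, a, b. -/
open TensorProduct LinearMap

noncomputable section

section Defs

variable (k : Type*) [CommRing k]

/-- Convolution product on `Hom(C, A)`: `(φ * ψ)(c) = φ(c₁) ψ(c₂)`. -/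
def conv {C A : Type*} [AddCommMonoid C] [Module k C] [Coalgebra k C]
    [Ring A] [Algebra k A] (φ ψ : C →ₗ[k] A) : C →ₗ[k] A :=
  LinearMap.mul' k A ∘ₗ TensorProduct.map φ ψ ∘ₗ Coalgebra.comul

variable (H : Type*) [Ring H] [Algebra k H] [Coalgebra k H]

/-- The target counital map `ε_t(h) = ε(1₁ h) 1₂`. -/
def epsT : H →ₗ[k] H :=
  (TensorProduct.lid k H).toLinearMap ∘ₗ TensorProduct.map Coalgebra.counit LinearMap.id
    ∘ₗ LinearMap.mulLeft k (Coalgebra.comul (R := k) (1 : H))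
    ∘ₗ (TensorProduct.mk k H H).flip 1

/-- The source counital map `ε_s(h) = 1₁ ε(h 1₂)`. -/
def epsS : H →ₗ[k] H :=
  (TensorProduct.rid k H).toLinearMap ∘ₗ TensorProduct.map LinearMap.id Coalgebra.counit
    ∘ₗ LinearMap.mulRight k (Coalgebra.comul (R := k) (1 : H))
    ∘ₗ TensorProduct.mk k H H 1

/-- The axioms making the algebra-and-coalgebra `H` a weak Hopf algebra with
antipode `S`. -/
structure IsWeakHopf (S : H →ₗ[k] H) : Prop where
  comul_mul : ∀ g h : H,
    Coalgebra.comul (R := k) (g * h) = Coalgebra.comul (R := k) g * Coalgebra.comul (R := k) h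
  comul_one_left :
    TensorProduct.map (Coalgebra.comul (R := k)) LinearMap.id (Coalgebra.comul (R := k) (1 : H)) =
      (Coalgebra.comul (R := k) (1 : H) ⊗ₜ (1 : H)) *
        ((TensorProduct.assoc k H H H).symm ((1 : H) ⊗ₜ Coalgebra.comul (R := k) (1 : H)))
  comul_one_right :
    TensorProduct.map (Coalgebra.comul (R := k)) LinearMap.id (Coalgebra.comul (R := k) (1 : H)) =
      ((TensorProduct.assoc k H H H).symm ((1 : H) ⊗ₜ Coalgebra.comul (R := k) (1 : H))) *
        (Coalgebra.comul (R := k) (1 : H) ⊗ₜ (1 : H))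
  counit_mul_left : ∀ h g l : H,
    Coalgebra.counit (R := k) (h * g * l) =
      conv k (Coalgebra.counit ∘ₗ LinearMap.mulLeft k h)
        (Coalgebra.counit ∘ₗ LinearMap.mulRight k l) g
  counit_mul_right : ∀ h g l : H,
    Coalgebra.counit (R := k) (h * g * l) =
      conv k (Coalgebra.counit ∘ₗ LinearMap.mulRight k l)
        (Coalgebra.counit ∘ₗ LinearMap.mulLeft k h) g
  conv_id_antipode : conv k LinearMap.id S = epsT k H
  conv_antipode_id : conv k S LinearMap.id = epsS k H
  conv_antipode_id_antipode : conv k (conv k S LinearMap.id) S = S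

/-- `smul3 u v a` is the linear map `h ↦ u(h₁) a v(h₂)` (Sweedler notation). -/
def smul3 {A : Type*} [Ring A] [Algebra k A] (u v : H →ₗ[k] A) (a : A) : H →ₗ[k] A :=
  TensorProduct.lift ((LinearMap.mul k A ∘ₗ LinearMap.mulRight k a ∘ₗ u).compl₂ v)
    ∘ₗ Coalgebra.comul

/-- The bilinear map `t(g, h) = v(h₁) v(g₁) u(g₂ h₂)`, as a linear map on `H ⊗ H`. -/
def tmap {A : Type*} [Ring A] [Algebra k A] (u v : H →ₗ[k] A) : H ⊗[k] H →ₗ[k] A :=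
  LinearMap.mul' k A ∘ₗ
    TensorProduct.map
      (LinearMap.mul' k A ∘ₗ TensorProduct.map v v ∘ₗ (TensorProduct.comm k H H).toLinearMap)
      (u ∘ₗ LinearMap.mul' k H) ∘ₗ
    (TensorProduct.tensorTensorTensorComm k H H H H).toLinearMap ∘ₗ
    TensorProduct.map Coalgebra.comul Coalgebra.comul

end Defs


section Aux

variable {k : Type*} [CommRing k] {H : Type*} [Ring H] [Algebra k H] [Coalgebra k H]
  {A : Type*} [Ring A] [Algebra k A]

lemma conv_assoc' (p q r : H →ₗ[k] A) :
    conv k (conv k p q) r = conv k p (conv k q r) := by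
  unfold conv
  have h1 : TensorProduct.map (mul' k A ∘ₗ TensorProduct.map p q ∘ₗ Coalgebra.comul) r
      = TensorProduct.map (mul' k A ∘ₗ TensorProduct.map p q) r ∘ₗ
        (Coalgebra.comul (R := k) (A := H)).rTensor H := by
    ext x y; simp
  have h2 : TensorProduct.map p (mul' k A ∘ₗ TensorProduct.map q r ∘ₗ Coalgebra.comul)
      = TensorProduct.map p (mul' k A ∘ₗ TensorProduct.map q r) ∘ₗ
        (Coalgebra.comul (R := k) (A := H)).lTensor H := by
    ext x y; simp
  have h3 : (Coalgebra.comul (R := k) (A := H)).rTensor H ∘ₗ Coalgebra.comul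
      = (TensorProduct.assoc k H H H).symm.toLinearMap ∘ₗ
        (Coalgebra.comul (R := k) (A := H)).lTensor H ∘ₗ Coalgebra.comul := by
    ext x
    exact (Coalgebra.coassoc_symm_apply x).symm
  have h4 : (mul' k A ∘ₗ TensorProduct.map (mul' k A ∘ₗ TensorProduct.map p q) r) ∘ₗ
      (TensorProduct.assoc k H H H).symm.toLinearMap
      = mul' k A ∘ₗ TensorProduct.map p (mul' k A ∘ₗ TensorProduct.map q r) := by
    ext x y z
    simp [mul_assoc]
  rw [h1, h2]
  simp only [LinearMap.comp_assoc]
  rw [h3]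
  simp only [← LinearMap.comp_assoc]
  rw [h4]

lemma mulRight_conv (a : A) (p q : H →ₗ[k] A) :
    mulRight k a ∘ₗ conv k p q = conv k p (mulRight k a ∘ₗ q) := by
  unfold conv
  have h : (mulRight k a ∘ₗ mul' k A) ∘ₗ TensorProduct.map p q
      = mul' k A ∘ₗ TensorProduct.map p (mulRight k a ∘ₗ q) := by
    ext x y; simp [mul_assoc]
  simp only [← LinearMap.comp_assoc]
  rw [h]

lemma smul3_eq (u v : H →ₗ[k] A) (a : A) :
    smul3 k H u v a = conv k (mulRight k a ∘ₗ u) v := by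
  unfold smul3 conv
  have h : TensorProduct.lift ((LinearMap.mul k A ∘ₗ LinearMap.mulRight k a ∘ₗ u).compl₂ v)
      = mul' k A ∘ₗ TensorProduct.map (mulRight k a ∘ₗ u) v := by
    ext x y; simp
  rw [h, LinearMap.comp_assoc]

variable {f u v : H →ₗ[k] A}

lemma key_Tuv (hfv : conv k f v = v) (huf : conv k u f = u) (a : A) :
    smul3 k H u v a = conv k u (conv k (smul3 k H f f a) v) := by
  calc smul3 k H u v a = conv k (mulRight k a ∘ₗ u) v := smul3_eq u v a
    _ = conv k (mulRight k a ∘ₗ conv k u f) v := by rw [huf]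
    _ = conv k (conv k u (mulRight k a ∘ₗ f)) v := by rw [mulRight_conv]
    _ = conv k u (conv k (mulRight k a ∘ₗ f) v) := conv_assoc' ..
    _ = conv k u (conv k (mulRight k a ∘ₗ f) (conv k f v)) := by rw [hfv]
    _ = conv k u (conv k (conv k (mulRight k a ∘ₗ f) f) v) := by rw [conv_assoc']
    _ = conv k u (conv k (smul3 k H f f a) v) := by rw [smul3_eq]

lemma key_fF (hf : conv k f f = f) (a : A) :
    conv k f (smul3 k H f f a) = smul3 k H f f a := by
  rw [smul3_eq, ← conv_assoc', ← mulRight_conv, hf]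

lemma key_Ff (hf : conv k f f = f) (a : A) :
    conv k (smul3 k H f f a) f = smul3 k H f f a := by
  rw [smul3_eq, conv_assoc', hf]

lemma key_vT (hf : conv k f f = f) (hvu : conv k v u = f) (hfv : conv k f v = v)
    (huf : conv k u f = u) (a : A) :
    conv k v (smul3 k H u v a) = conv k (smul3 k H f f a) v := by
  rw [key_Tuv hfv huf, ← conv_assoc', hvu, ← conv_assoc', key_fF hf]

lemma key_Tu (hf : conv k f f = f) (hvu : conv k v u = f) (hfv : conv k f v = v)
    (huf : conv k u f = u) (a : A) :
    conv k (smul3 k H u v a) u = conv k u (smul3 k H f f a) := by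
  rw [key_Tuv hfv huf, conv_assoc', conv_assoc', hvu, key_Ff hf]

lemma key_F_of_T (hf : conv k f f = f) (hvu : conv k v u = f) (hfv : conv k f v = v)
    (huf : conv k u f = u) (a : A) :
    smul3 k H f f a = conv k v (conv k (smul3 k H u v a) u) := by
  rw [← conv_assoc', key_vT hf hvu hfv huf, conv_assoc', hvu, key_Ff hf]

end Aux

section Statement

variable (k : Type*) [Field k] (H : Type*) [Ring H] [Algebra k H] [Coalgebra k H]
  [FiniteDimensional k H] (A : Type*) [Ring A] [Algebra k A]

/-- Theorem 3.5(i): for the map `h · a = u(h₁) a u⁻¹(h₂)` associated with an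
`(e,f)`-invertible `u ∈ Hom(H,A)`, one has `h · (ab) = (h₁ · a)(h₂ · b)` for all
`h, a, b` if and only if `φ_{f,h}(ab) = φ_{f,h₁}(a) φ_{f,h₂}(b)` for all `h, a, b`,
where `φ_{f,h}(a) = f(h₁) a f(h₂)`. -/
theorem smul_mul_iff (S : H →ₗ[k] H) (hH : IsWeakHopf k H S)
    (e f u v : H →ₗ[k] A)
    (he : conv k e e = e) (hf : conv k f f = f)
    (huv : conv k u v = e) (hvu : conv k v u = f)
    (huf : conv k u f = u) (hfv : conv k f v = v) :
    (∀ (h : H) (a b : A),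
        smul3 k H u v (a * b) h = conv k (smul3 k H u v a) (smul3 k H u v b) h) ↔
      (∀ (h : H) (a b : A),
        smul3 k H f f (a * b) h = conv k (smul3 k H f f a) (smul3 k H f f b) h) := by
  have hassoc := fun p q r : H →ₗ[k] A => conv_assoc' p q r
  constructor
  · intro hL h a b
    have L : smul3 k H u v (a * b) = conv k (smul3 k H u v a) (smul3 k H u v b) :=
      LinearMap.ext fun g => hL g a b
    have : smul3 k H f f (a * b) = conv k (smul3 k H f f a) (smul3 k H f f b) := by
      calc smul3 k H f f (a * b)
          = conv k v (conv k (smul3 k H u v (a * b)) u) := key_F_of_T hf hvu hfv huf _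
        _ = conv k v (conv k (conv k (smul3 k H u v a) (smul3 k H u v b)) u) := by rw [L]
        _ = conv k (conv k v (smul3 k H u v a)) (conv k (smul3 k H u v b) u) := by
            rw [conv_assoc', conv_assoc']
        _ = conv k (conv k (smul3 k H f f a) v) (conv k u (smul3 k H f f b)) := by
            rw [key_vT hf hvu hfv huf, key_Tu hf hvu hfv huf]
        _ = conv k (smul3 k H f f a) (conv k (conv k v u) (smul3 k H f f b)) := by
            rw [conv_assoc', conv_assoc']
        _ = conv k (smul3 k H f f a) (smul3 k H f f b) := by rw [hvu, key_fF hf]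
    exact LinearMap.congr_fun this h
  · intro hR h a b
    have R : smul3 k H f f (a * b) = conv k (smul3 k H f f a) (smul3 k H f f b) :=
      LinearMap.ext fun g => hR g a b
    have : smul3 k H u v (a * b) = conv k (smul3 k H u v a) (smul3 k H u v b) := by
      calc smul3 k H u v (a * b)
          = conv k u (conv k (smul3 k H f f (a * b)) v) := key_Tuv hfv huf _
        _ = conv k u (conv k (conv k (smul3 k H f f a) (smul3 k H f f b)) v) := by rw [R]
        _ = conv k u (conv k (smul3 k H f f a) (conv k (smul3 k H f f b) v)) := by
            rw [conv_assoc']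
        _ = conv k u (conv k (smul3 k H f f a) (conv k (conv k f (smul3 k H f f b)) v)) := by
            rw [key_fF hf]
        _ = conv k u (conv k (smul3 k H f f a) (conv k (conv k (conv k v u) (smul3 k H f f b)) v)) := by
            rw [hvu]
        _ = conv k (conv k u (conv k (smul3 k H f f a) v))
              (conv k u (conv k (smul3 k H f f b) v)) := by
            simp only [conv_assoc']
        _ = conv k (smul3 k H u v a) (smul3 k H u v b) := by
            rw [← key_Tuv hfv huf, ← key_Tuv hfv huf]
    exact LinearMap.congr_fun this h


end Statement
end
end

section
/- Let H be a weak Hopf algebra, A an algebra, u ∈ Hom(H,A) an (e,f)-invertible element, and define h · a = u(h₁) a u⁻¹(h₂). Then h · 1_A = ε_t(h) · 1_A for all h ∈ H if and only if e ∘ ε_t = e, if and only if ker(ε_t) ⊆ ker(e). -/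
open TensorProduct LinearMap

noncomputable section

section MyAux

variable {k : Type*} [Field k] {H : Type*} [Ring H] [Algebra k H] [Coalgebra k H]
  {A : Type*} [Ring A] [Algebra k A]

lemma my_smul3_one (u v : H →ₗ[k] A) : smul3 k H u v (1 : A) = conv k u v := by
  have key : TensorProduct.lift ((LinearMap.mul k A ∘ₗ LinearMap.mulRight k (1:A) ∘ₗ u).compl₂ v)
      = LinearMap.mul' k A ∘ₗ TensorProduct.map u v := by
    ext g h
    simp [LinearMap.mul_apply']
  unfold smul3 conv
  rw [key, LinearMap.comp_assoc]

lemma my_epsT_repr (s : Finset (H × H))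
    (hs : Coalgebra.comul (R := k) (1 : H) = ∑ p ∈ s, p.1 ⊗ₜ[k] p.2) (h : H) :
    epsT k H h = ∑ p ∈ s, Coalgebra.counit (R := k) (p.1 * h) • p.2 := by
  simp only [epsT, LinearMap.comp_apply, LinearMap.flip_apply, TensorProduct.mk_apply,
    LinearMap.mulLeft_apply, hs, Finset.sum_mul, Algebra.TensorProduct.tmul_mul_tmul,
    mul_one, map_sum, TensorProduct.map_tmul, LinearMap.id_coe, id_eq,
    LinearEquiv.coe_coe, TensorProduct.lid_tmul]

lemma my_counit_mul_repr {S : H →ₗ[k] H} (hH : IsWeakHopf k H S) (s : Finset (H × H))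
    (hs : Coalgebra.comul (R := k) (1 : H) = ∑ p ∈ s, p.1 ⊗ₜ[k] p.2) (g h : H) :
    Coalgebra.counit (R := k) (g * h) =
      ∑ p ∈ s, Coalgebra.counit (R := k) (p.1 * h) * Coalgebra.counit (R := k) (g * p.2) := by
  have key := hH.counit_mul_right g 1 h
  rw [mul_one] at key
  rw [key]
  unfold conv
  simp [hs, LinearMap.mul'_apply]

lemma my_counit_epsT {S : H →ₗ[k] H} (hH : IsWeakHopf k H S) (g h : H) :
    Coalgebra.counit (R := k) (g * epsT k H h) = Coalgebra.counit (R := k) (g * h) := by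
  obtain ⟨s, hs⟩ := TensorProduct.exists_finset (Coalgebra.comul (R := k) (1 : H))
  rw [my_epsT_repr s hs, Finset.mul_sum]
  simp only [mul_smul_comm, map_sum, map_smul, smul_eq_mul]
  rw [my_counit_mul_repr hH s hs g h]

lemma my_epsT_idem {S : H →ₗ[k] H} (hH : IsWeakHopf k H S) (h : H) :
    epsT k H (epsT k H h) = epsT k H h := by
  obtain ⟨s, hs⟩ := TensorProduct.exists_finset (Coalgebra.comul (R := k) (1 : H))
  rw [my_epsT_repr s hs (epsT k H h)]
  simp only [my_counit_epsT hH]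
  rw [← my_epsT_repr s hs h]

end MyAux

section Statement

variable (k : Type*) [Field k] (H : Type*) [Ring H] [Algebra k H] [Coalgebra k H]
  [FiniteDimensional k H] (A : Type*) [Ring A] [Algebra k A]

/-- Theorem 3.5(ii): for the map `h · a = u(h₁) a u⁻¹(h₂)` associated with an
`(e,f)`-invertible `u ∈ Hom(H,A)`, one has `h · 1 = ε_t(h) · 1` for all `h` iff
`e ∘ ε_t = e` iff `ker ε_t ⊆ ker e`. -/
theorem smul_one_iff (S : H →ₗ[k] H) (hH : IsWeakHopf k H S)
    (e f u v : H →ₗ[k] A)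
    (he : conv k e e = e) (hf : conv k f f = f)
    (huv : conv k u v = e) (hvu : conv k v u = f)
    (huf : conv k u f = u) (hfv : conv k f v = v) :
    ((∀ h : H, smul3 k H u v (1 : A) h = smul3 k H u v (1 : A) (epsT k H h)) ↔
        e ∘ₗ epsT k H = e) ∧
      (e ∘ₗ epsT k H = e ↔ LinearMap.ker (epsT k H) ≤ LinearMap.ker e) := by
  constructor
  · simp only [my_smul3_one u v, huv]
    constructor
    · intro hall
      ext h
      exact (hall h).symm
    · intro hc h
      exact (LinearMap.congr_fun hc h).symm
  · constructor
    · intro hc h hh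
      rw [LinearMap.mem_ker] at hh ⊢
      have := LinearMap.congr_fun hc h
      simp only [LinearMap.comp_apply, hh, map_zero] at this
      exact this.symm
    · intro hker
      ext h
      have h0 : epsT k H h - h ∈ LinearMap.ker (epsT k H) := by
        rw [LinearMap.mem_ker, map_sub, my_epsT_idem hH, sub_self]
      have := hker h0
      rw [LinearMap.mem_ker, map_sub, sub_eq_zero] at this
      simpa using this

end Statement
end
end

section
/- Let H be a weak Hopf algebra, A an algebra, u ∈ Hom(H,A) an (e,f)-invertible element with f(H) ⊆ Z(A), and define h · a = u(h₁) a u⁻¹(h₂). Then g · (h · a) = (gh) · a for all g, h ∈ H, a ∈ A if and only if g · e(h) = e(gh) for all g, h and the bilinear map t(g,h) = u⁻¹(h₁)u⁻¹(g₁)u(g₂h₂) takes values in the center Z(A). -/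
open TensorProduct LinearMap

noncomputable section

section Aux
open Coalgebra
open scoped Coalgebra
namespace WHAux
variable {k : Type*} [CommRing k] {A : Type*} [Ring A] [Algebra k A]

lemma central_comm {z : A} (hz : z ∈ Set.center A) (a : A) : z * a = a * z :=
  (Semigroup.mem_center_iff.mp hz a).symm

section Core
variable {M N : Type*} [AddCommMonoid M] [Module k M] [AddCommMonoid N] [Module k N]

lemma mulmap_left (a : A) (Φ : M →ₗ[k] A) (Ψ : N →ₗ[k] A) :
    mul' k A ∘ₗ TensorProduct.map (mulLeft k a ∘ₗ Φ) Ψ =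
      mulLeft k a ∘ₗ mul' k A ∘ₗ TensorProduct.map Φ Ψ :=
  TensorProduct.ext' fun x y => by simp [mul_assoc]

lemma mulmap_right (a : A) (Φ : M →ₗ[k] A) (Ψ : N →ₗ[k] A) :
    mul' k A ∘ₗ TensorProduct.map Φ (mulRight k a ∘ₗ Ψ) =
      mulRight k a ∘ₗ mul' k A ∘ₗ TensorProduct.map Φ Ψ :=
  TensorProduct.ext' fun x y => by simp [mul_assoc]

lemma mulmap_mid (a : A) (Φ : M →ₗ[k] A) (Ψ : N →ₗ[k] A) :
    mul' k A ∘ₗ TensorProduct.map (mulRight k a ∘ₗ Φ) Ψ =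
      mul' k A ∘ₗ TensorProduct.map Φ (mulLeft k a ∘ₗ Ψ) :=
  TensorProduct.ext' fun x y => by simp [mul_assoc]

lemma mulmap_central (a : A) {Φ : M →ₗ[k] A} (Ψ : N →ₗ[k] A)
    (hΦ : ∀ m : M, Φ m ∈ Set.center A) :
    mul' k A ∘ₗ TensorProduct.map Φ (mulLeft k a ∘ₗ Ψ) =
      mulLeft k a ∘ₗ mul' k A ∘ₗ TensorProduct.map Φ Ψ :=
  TensorProduct.ext' fun x y => by
    simp only [LinearMap.comp_apply, TensorProduct.map_tmul, mul'_apply, mulLeft_apply]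
    rw [← mul_assoc, central_comm (hΦ x) a, mul_assoc]

lemma comp_central (a : A) {Φ : M →ₗ[k] A} (hΦ : ∀ m : M, Φ m ∈ Set.center A) :
    mulLeft k a ∘ₗ Φ = mulRight k a ∘ₗ Φ :=
  LinearMap.ext fun x => by
    simp only [LinearMap.comp_apply, mulLeft_apply, mulRight_apply]
    exact (central_comm (hΦ x) a).symm

end Core

section Conv
variable {C : Type*} [AddCommMonoid C] [Module k C] [Coalgebra k C]

lemma conv_comp_eq (φ ψ : C →ₗ[k] A) :
    conv k φ ψ = (mul' k A ∘ₗ TensorProduct.map φ ψ) ∘ₗ Coalgebra.comul := rfl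

lemma conv_repr {x : C} {ι : Type*} (r : Coalgebra.Repr k x ι) (φ ψ : C →ₗ[k] A) :
    conv k φ ψ x = ∑ i ∈ r.index, φ (r.left i) * ψ (r.right i) := by
  simp only [conv, LinearMap.comp_apply, ← r.eq, map_sum, TensorProduct.map_tmul, mul'_apply]

lemma conv_mulLeft (a : A) (φ ψ : C →ₗ[k] A) :
    conv k (mulLeft k a ∘ₗ φ) ψ = mulLeft k a ∘ₗ conv k φ ψ := by
  rw [conv_comp_eq, conv_comp_eq, mulmap_left, LinearMap.comp_assoc]

lemma conv_mulRight (a : A) (φ ψ : C →ₗ[k] A) :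
    conv k φ (mulRight k a ∘ₗ ψ) = mulRight k a ∘ₗ conv k φ ψ := by
  rw [conv_comp_eq, conv_comp_eq, mulmap_right, LinearMap.comp_assoc]

lemma conv_mid (a : A) (φ ψ : C →ₗ[k] A) :
    conv k (mulRight k a ∘ₗ φ) ψ = conv k φ (mulLeft k a ∘ₗ ψ) := by
  rw [conv_comp_eq, conv_comp_eq, mulmap_mid]

lemma conv_central (a : A) {φ : C →ₗ[k] A} (ψ : C →ₗ[k] A)
    (hφ : ∀ x, φ x ∈ Set.center A) :
    conv k φ (mulLeft k a ∘ₗ ψ) = mulLeft k a ∘ₗ conv k φ ψ := by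
  rw [conv_comp_eq, conv_comp_eq, mulmap_central a ψ hφ, LinearMap.comp_assoc]

lemma conv_assoc (φ ψ χ : C →ₗ[k] A) :
    conv k (conv k φ ψ) χ = conv k φ (conv k ψ χ) := by
  apply LinearMap.ext; intro x
  have key := Coalgebra.sum_tmul_tmul_eq (ℛ k x)
    (fun i => ℛ k ((ℛ k x).left i)) (fun i => ℛ k ((ℛ k x).right i))
  have key2 := congrArg
    (mul' k A ∘ₗ lTensor A (mul' k A) ∘ₗ TensorProduct.map φ (TensorProduct.map ψ χ)) key
  simp only [map_sum, LinearMap.comp_apply, TensorProduct.map_tmul, lTensor_tmul,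
    mul'_apply] at key2
  rw [conv_repr (ℛ k x), conv_repr (ℛ k x)]
  calc ∑ i ∈ (ℛ k x).index, conv k φ ψ ((ℛ k x).left i) * χ ((ℛ k x).right i)
      = ∑ i ∈ (ℛ k x).index, ∑ j ∈ (ℛ k ((ℛ k x).left i)).index,
          φ ((ℛ k ((ℛ k x).left i)).left j) *
            (ψ ((ℛ k ((ℛ k x).left i)).right j) * χ ((ℛ k x).right i)) := by
        refine Finset.sum_congr rfl fun i _ => ?_
        rw [conv_repr (ℛ k ((ℛ k x).left i)), Finset.sum_mul]
        exact Finset.sum_congr rfl fun j _ => (mul_assoc _ _ _)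
    _ = ∑ i ∈ (ℛ k x).index, ∑ j ∈ (ℛ k ((ℛ k x).right i)).index,
          φ ((ℛ k x).left i) *
            (ψ ((ℛ k ((ℛ k x).right i)).left j) * χ ((ℛ k ((ℛ k x).right i)).right j)) := key2
    _ = ∑ i ∈ (ℛ k x).index, φ ((ℛ k x).left i) * conv k ψ χ ((ℛ k x).right i) := by
        refine Finset.sum_congr rfl fun i _ => ?_
        rw [conv_repr (ℛ k ((ℛ k x).right i)), Finset.mul_sum]

end Conv

section H2
variable {H : Type*} [Ring H] [Algebra k H] [Coalgebra k H]

def D2 : H ⊗[k] H →ₗ[k] (H ⊗[k] H) ⊗[k] (H ⊗[k] H) :=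
  (TensorProduct.tensorTensorTensorComm k H H H H).toLinearMap ∘ₗ
    TensorProduct.map Coalgebra.comul Coalgebra.comul

def conv2 (Φ Ψ : H ⊗[k] H →ₗ[k] A) : H ⊗[k] H →ₗ[k] A :=
  mul' k A ∘ₗ TensorProduct.map Φ Ψ ∘ₗ D2

lemma conv2_comp_eq (Φ Ψ : H ⊗[k] H →ₗ[k] A) :
    conv2 Φ Ψ = (mul' k A ∘ₗ TensorProduct.map Φ Ψ) ∘ₗ D2 := rfl

lemma conv2_repr {g h : H} {ι κ : Type*} (rg : Coalgebra.Repr k g ι) (rh : Coalgebra.Repr k h κ)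
    (Φ Ψ : H ⊗[k] H →ₗ[k] A) :
    conv2 Φ Ψ (g ⊗ₜ[k] h) =
      ∑ i ∈ rg.index, ∑ j ∈ rh.index,
        Φ (rg.left i ⊗ₜ[k] rh.left j) * Ψ (rg.right i ⊗ₜ[k] rh.right j) := by
  simp only [conv2, D2, LinearMap.comp_apply, LinearEquiv.coe_coe, TensorProduct.map_tmul,
    ← rg.eq, ← rh.eq, sum_tmul, tmul_sum, map_sum, tensorTensorTensorComm_tmul, mul'_apply]
  exact Finset.sum_comm

lemma conv2_mulLeft (a : A) (Φ Ψ : H ⊗[k] H →ₗ[k] A) :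
    conv2 (mulLeft k a ∘ₗ Φ) Ψ = mulLeft k a ∘ₗ conv2 Φ Ψ := by
  rw [conv2_comp_eq, conv2_comp_eq, mulmap_left, LinearMap.comp_assoc]

lemma conv2_mulRight (a : A) (Φ Ψ : H ⊗[k] H →ₗ[k] A) :
    conv2 Φ (mulRight k a ∘ₗ Ψ) = mulRight k a ∘ₗ conv2 Φ Ψ := by
  rw [conv2_comp_eq, conv2_comp_eq, mulmap_right, LinearMap.comp_assoc]

lemma conv2_mid (a : A) (Φ Ψ : H ⊗[k] H →ₗ[k] A) :
    conv2 (mulRight k a ∘ₗ Φ) Ψ = conv2 Φ (mulLeft k a ∘ₗ Ψ) := by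
  rw [conv2_comp_eq, conv2_comp_eq, mulmap_mid]

lemma conv2_central (a : A) {Φ : H ⊗[k] H →ₗ[k] A} (Ψ : H ⊗[k] H →ₗ[k] A)
    (hΦ : ∀ x, Φ x ∈ Set.center A) :
    conv2 Φ (mulLeft k a ∘ₗ Ψ) = mulLeft k a ∘ₗ conv2 Φ Ψ := by
  rw [conv2_comp_eq, conv2_comp_eq, mulmap_central a Ψ hΦ, LinearMap.comp_assoc]

def reprMul (hmul : ∀ g h : H,
      Coalgebra.comul (R := k) (g * h) = Coalgebra.comul (R := k) g * Coalgebra.comul (R := k) h)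
    {g h : H} {ι κ : Type*} (rg : Coalgebra.Repr k g ι) (rh : Coalgebra.Repr k h κ) :
    Coalgebra.Repr k (g * h) (ι × κ) where
  index := rg.index ×ˢ rh.index
  left p := rg.left p.1 * rh.left p.2
  right p := rg.right p.1 * rh.right p.2
  eq := by
    rw [Finset.sum_product]
    rw [hmul, ← rg.eq, ← rh.eq, Finset.sum_mul_sum]
    simp only [Algebra.TensorProduct.tmul_mul_tmul]

lemma conv2_mul (hmul : ∀ g h : H,
      Coalgebra.comul (R := k) (g * h) = Coalgebra.comul (R := k) g * Coalgebra.comul (R := k) h)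
    (φ ψ : H →ₗ[k] A) :
    conv2 (φ ∘ₗ mul' k H) (ψ ∘ₗ mul' k H) = conv k φ ψ ∘ₗ mul' k H := by
  apply TensorProduct.ext'; intro g h
  rw [conv2_repr (ℛ k g) (ℛ k h)]
  simp only [LinearMap.comp_apply, mul'_apply]
  rw [conv_repr (reprMul hmul (ℛ k g) (ℛ k h))]
  simp only [reprMul]
  rw [Finset.sum_product]

lemma conv2_assoc (Φ Ψ X : H ⊗[k] H →ₗ[k] A) :
    conv2 (conv2 Φ Ψ) X = conv2 Φ (conv2 Ψ X) := by
  apply TensorProduct.ext'; intro g h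
  have kg := Coalgebra.sum_tmul_tmul_eq (ℛ k g)
    (fun i => ℛ k ((ℛ k g).left i)) (fun i => ℛ k ((ℛ k g).right i))
  have kh := Coalgebra.sum_tmul_tmul_eq (ℛ k h)
    (fun j => ℛ k ((ℛ k h).left j)) (fun j => ℛ k ((ℛ k h).right j))
  set Ξ : (H ⊗[k] (H ⊗[k] H)) ⊗[k] (H ⊗[k] (H ⊗[k] H)) →ₗ[k] A :=
    mul' k A ∘ₗ lTensor A (mul' k A) ∘ₗ
      TensorProduct.map Φ (TensorProduct.map Ψ X) ∘ₗ
      lTensor (H ⊗[k] H) (TensorProduct.tensorTensorTensorComm k H H H H).toLinearMap ∘ₗ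
      (TensorProduct.tensorTensorTensorComm k H (H ⊗[k] H) H (H ⊗[k] H)).toLinearMap with hΞ
  have key := congrArg₂ (fun x y => Ξ (x ⊗ₜ[k] y)) kg kh
  simp only [hΞ, sum_tmul, tmul_sum, map_sum, LinearMap.comp_apply, LinearEquiv.coe_coe,
    tensorTensorTensorComm_tmul, lTensor_tmul, TensorProduct.map_tmul, mul'_apply] at key
  rw [conv2_repr (ℛ k g) (ℛ k h), conv2_repr (ℛ k g) (ℛ k h)]
  calc ∑ i ∈ (ℛ k g).index, ∑ j ∈ (ℛ k h).index,
        conv2 Φ Ψ ((ℛ k g).left i ⊗ₜ[k] (ℛ k h).left j) *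
          X ((ℛ k g).right i ⊗ₜ[k] (ℛ k h).right j)
      = ∑ j ∈ (ℛ k h).index, ∑ q ∈ (ℛ k ((ℛ k h).left j)).index,
          ∑ i ∈ (ℛ k g).index, ∑ p ∈ (ℛ k ((ℛ k g).left i)).index,
          Φ ((ℛ k ((ℛ k g).left i)).left p ⊗ₜ[k] (ℛ k ((ℛ k h).left j)).left q) *
            (Ψ ((ℛ k ((ℛ k g).left i)).right p ⊗ₜ[k] (ℛ k ((ℛ k h).left j)).right q) *
              X ((ℛ k g).right i ⊗ₜ[k] (ℛ k h).right j)) := by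
        rw [Finset.sum_comm]
        refine Finset.sum_congr rfl fun j _ => ?_
        calc ∑ i ∈ (ℛ k g).index,
              conv2 Φ Ψ ((ℛ k g).left i ⊗ₜ[k] (ℛ k h).left j) *
                X ((ℛ k g).right i ⊗ₜ[k] (ℛ k h).right j)
            = ∑ i ∈ (ℛ k g).index, ∑ p ∈ (ℛ k ((ℛ k g).left i)).index,
                ∑ q ∈ (ℛ k ((ℛ k h).left j)).index,
                Φ ((ℛ k ((ℛ k g).left i)).left p ⊗ₜ[k] (ℛ k ((ℛ k h).left j)).left q) *
                  (Ψ ((ℛ k ((ℛ k g).left i)).right p ⊗ₜ[k] (ℛ k ((ℛ k h).left j)).right q) *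
                    X ((ℛ k g).right i ⊗ₜ[k] (ℛ k h).right j)) := by
              refine Finset.sum_congr rfl fun i _ => ?_
              rw [conv2_repr (ℛ k ((ℛ k g).left i)) (ℛ k ((ℛ k h).left j)), Finset.sum_mul]
              refine Finset.sum_congr rfl fun p _ => ?_
              rw [Finset.sum_mul]
              exact Finset.sum_congr rfl fun q _ => (mul_assoc _ _ _)
          _ = ∑ i ∈ (ℛ k g).index, ∑ q ∈ (ℛ k ((ℛ k h).left j)).index,
                ∑ p ∈ (ℛ k ((ℛ k g).left i)).index,
                Φ ((ℛ k ((ℛ k g).left i)).left p ⊗ₜ[k] (ℛ k ((ℛ k h).left j)).left q) *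
                  (Ψ ((ℛ k ((ℛ k g).left i)).right p ⊗ₜ[k] (ℛ k ((ℛ k h).left j)).right q) *
                    X ((ℛ k g).right i ⊗ₜ[k] (ℛ k h).right j)) := by
              exact Finset.sum_congr rfl fun i _ => Finset.sum_comm
          _ = ∑ q ∈ (ℛ k ((ℛ k h).left j)).index, ∑ i ∈ (ℛ k g).index,
                ∑ p ∈ (ℛ k ((ℛ k g).left i)).index,
                Φ ((ℛ k ((ℛ k g).left i)).left p ⊗ₜ[k] (ℛ k ((ℛ k h).left j)).left q) *
                  (Ψ ((ℛ k ((ℛ k g).left i)).right p ⊗ₜ[k] (ℛ k ((ℛ k h).left j)).right q) *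
                    X ((ℛ k g).right i ⊗ₜ[k] (ℛ k h).right j)) := Finset.sum_comm
    _ = ∑ j ∈ (ℛ k h).index, ∑ q ∈ (ℛ k ((ℛ k h).right j)).index,
          ∑ i ∈ (ℛ k g).index, ∑ p ∈ (ℛ k ((ℛ k g).right i)).index,
          Φ ((ℛ k g).left i ⊗ₜ[k] (ℛ k h).left j) *
            (Ψ ((ℛ k ((ℛ k g).right i)).left p ⊗ₜ[k] (ℛ k ((ℛ k h).right j)).left q) *
              X ((ℛ k ((ℛ k g).right i)).right p ⊗ₜ[k] (ℛ k ((ℛ k h).right j)).right q)) := key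
    _ = ∑ i ∈ (ℛ k g).index, ∑ j ∈ (ℛ k h).index,
          Φ ((ℛ k g).left i ⊗ₜ[k] (ℛ k h).left j) *
            conv2 Ψ X ((ℛ k g).right i ⊗ₜ[k] (ℛ k h).right j) := by
        rw [Finset.sum_comm]
        refine Finset.sum_congr rfl fun j _ => ?_
        calc ∑ q ∈ (ℛ k ((ℛ k h).right j)).index, ∑ i ∈ (ℛ k g).index,
              ∑ p ∈ (ℛ k ((ℛ k g).right i)).index,
              Φ ((ℛ k g).left i ⊗ₜ[k] (ℛ k h).left j) *
                (Ψ ((ℛ k ((ℛ k g).right i)).left p ⊗ₜ[k] (ℛ k ((ℛ k h).right j)).left q) *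
                  X ((ℛ k ((ℛ k g).right i)).right p ⊗ₜ[k] (ℛ k ((ℛ k h).right j)).right q))
            = ∑ i ∈ (ℛ k g).index, ∑ q ∈ (ℛ k ((ℛ k h).right j)).index,
              ∑ p ∈ (ℛ k ((ℛ k g).right i)).index,
              Φ ((ℛ k g).left i ⊗ₜ[k] (ℛ k h).left j) *
                (Ψ ((ℛ k ((ℛ k g).right i)).left p ⊗ₜ[k] (ℛ k ((ℛ k h).right j)).left q) *
                  X ((ℛ k ((ℛ k g).right i)).right p ⊗ₜ[k] (ℛ k ((ℛ k h).right j)).right q)) :=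
              Finset.sum_comm
          _ = ∑ i ∈ (ℛ k g).index,
              Φ ((ℛ k g).left i ⊗ₜ[k] (ℛ k h).left j) *
                conv2 Ψ X ((ℛ k g).right i ⊗ₜ[k] (ℛ k h).right j) := by
              refine Finset.sum_congr rfl fun i _ => ?_
              rw [conv2_repr (ℛ k ((ℛ k g).right i)) (ℛ k ((ℛ k h).right j)), Finset.mul_sum]
              rw [Finset.sum_comm]
              refine Finset.sum_congr rfl fun q _ => ?_
              rw [Finset.mul_sum]


lemma smul3_repr (u v : H →ₗ[k] A) (a : A) {x : H} {ι : Type*} (r : Coalgebra.Repr k x ι) :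
    smul3 k H u v a x = ∑ i ∈ r.index, u (r.left i) * a * v (r.right i) := by
  simp only [smul3, LinearMap.comp_apply, ← r.eq, map_sum, lift.tmul, LinearMap.compl₂_apply,
    LinearMap.mul_apply', mulRight_apply]

lemma central_ofTmul {Φ : H ⊗[k] H →ₗ[k] A} (hΦ : ∀ g h : H, Φ (g ⊗ₜ[k] h) ∈ Set.center A) :
    ∀ x, Φ x ∈ Set.center A := fun x => by
  induction x using TensorProduct.induction_on with
  | zero => rw [map_zero]; exact Set.zero_mem_center
  | tmul g h => exact hΦ g h
  | add x y hx hy => rw [map_add]; exact Set.add_mem_center hx hy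

variable (u v f : H →ₗ[k] A)

lemma convLG (hvu : conv k v u = f) (hfc : ∀ x : H, f x ∈ Set.center A) :
    conv2 (mul' k A ∘ₗ TensorProduct.map v v ∘ₗ (TensorProduct.comm k H H).toLinearMap)
      (mul' k A ∘ₗ TensorProduct.map u u) = mul' k A ∘ₗ TensorProduct.map f f := by
  apply TensorProduct.ext'; intro g h
  have hfg : ∑ i ∈ (ℛ k g).index, v ((ℛ k g).left i) * u ((ℛ k g).right i) = f g := by
    rw [← conv_repr (ℛ k g) v u, hvu]
  have hfh : ∑ j ∈ (ℛ k h).index, v ((ℛ k h).left j) * u ((ℛ k h).right j) = f h := by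
    rw [← conv_repr (ℛ k h) v u, hvu]
  rw [conv2_repr (ℛ k g) (ℛ k h)]
  simp only [LinearMap.comp_apply, LinearEquiv.coe_coe, comm_tmul, TensorProduct.map_tmul,
    mul'_apply]
  calc ∑ i ∈ (ℛ k g).index, ∑ j ∈ (ℛ k h).index,
        v ((ℛ k h).left j) * v ((ℛ k g).left i) * (u ((ℛ k g).right i) * u ((ℛ k h).right j))
      = ∑ j ∈ (ℛ k h).index, ∑ i ∈ (ℛ k g).index,
        v ((ℛ k h).left j) * (v ((ℛ k g).left i) * u ((ℛ k g).right i) * u ((ℛ k h).right j)) := by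
        rw [Finset.sum_comm]
        exact Finset.sum_congr rfl fun j _ => Finset.sum_congr rfl fun i _ => by
          simp only [mul_assoc]
    _ = ∑ j ∈ (ℛ k h).index, v ((ℛ k h).left j) * (f g * u ((ℛ k h).right j)) := by
        refine Finset.sum_congr rfl fun j _ => ?_
        rw [← Finset.mul_sum, ← Finset.sum_mul, hfg]
    _ = f g * ∑ j ∈ (ℛ k h).index, v ((ℛ k h).left j) * u ((ℛ k h).right j) := by
        rw [Finset.mul_sum]
        refine Finset.sum_congr rfl fun j _ => ?_
        rw [← mul_assoc, ← central_comm (hfc g) (v ((ℛ k h).left j)), mul_assoc]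
    _ = f g * f h := by rw [hfh]

lemma convGffL (hfv : conv k f v = v) (hfc : ∀ x : H, f x ∈ Set.center A) :
    conv2 (mul' k A ∘ₗ TensorProduct.map f f)
      (mul' k A ∘ₗ TensorProduct.map v v ∘ₗ (TensorProduct.comm k H H).toLinearMap) =
      mul' k A ∘ₗ TensorProduct.map v v ∘ₗ (TensorProduct.comm k H H).toLinearMap := by
  apply TensorProduct.ext'; intro g h
  have hvg : ∑ i ∈ (ℛ k g).index, f ((ℛ k g).left i) * v ((ℛ k g).right i) = v g := by
    rw [← conv_repr (ℛ k g) f v, hfv]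
  have hvh : ∑ j ∈ (ℛ k h).index, f ((ℛ k h).left j) * v ((ℛ k h).right j) = v h := by
    rw [← conv_repr (ℛ k h) f v, hfv]
  rw [conv2_repr (ℛ k g) (ℛ k h)]
  simp only [LinearMap.comp_apply, LinearEquiv.coe_coe, comm_tmul, TensorProduct.map_tmul,
    mul'_apply]
  calc ∑ i ∈ (ℛ k g).index, ∑ j ∈ (ℛ k h).index,
        f ((ℛ k g).left i) * f ((ℛ k h).left j) * (v ((ℛ k h).right j) * v ((ℛ k g).right i))
      = ∑ i ∈ (ℛ k g).index, f ((ℛ k g).left i) *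
          (v h * v ((ℛ k g).right i)) := by
        refine Finset.sum_congr rfl fun i _ => ?_
        calc ∑ j ∈ (ℛ k h).index,
              f ((ℛ k g).left i) * f ((ℛ k h).left j) *
                (v ((ℛ k h).right j) * v ((ℛ k g).right i))
            = ∑ j ∈ (ℛ k h).index,
              f ((ℛ k g).left i) *
                (f ((ℛ k h).left j) * v ((ℛ k h).right j) * v ((ℛ k g).right i)) :=
              Finset.sum_congr rfl fun j _ => by simp only [mul_assoc]
          _ = f ((ℛ k g).left i) *
                ((∑ j ∈ (ℛ k h).index, f ((ℛ k h).left j) * v ((ℛ k h).right j)) *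
                  v ((ℛ k g).right i)) := by
              rw [← Finset.mul_sum, ← Finset.sum_mul]
          _ = f ((ℛ k g).left i) * (v h * v ((ℛ k g).right i)) := by rw [hvh]
    _ = v h * ∑ i ∈ (ℛ k g).index, f ((ℛ k g).left i) * v ((ℛ k g).right i) := by
        rw [Finset.mul_sum]
        refine Finset.sum_congr rfl fun i _ => ?_
        rw [← mul_assoc, central_comm (hfc ((ℛ k g).left i)) (v h), mul_assoc]
    _ = v h * v g := by rw [hvg]

lemma eval_lhs (a : A) (g h : H) :
    conv2 (mul' k A ∘ₗ TensorProduct.map u u)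
      (mulLeft k a ∘ₗ (mul' k A ∘ₗ TensorProduct.map v v ∘ₗ (TensorProduct.comm k H H).toLinearMap))
      (g ⊗ₜ[k] h) = smul3 k H u v (smul3 k H u v a h) g := by
  rw [conv2_repr (ℛ k g) (ℛ k h), smul3_repr u v (smul3 k H u v a h) (ℛ k g),
    smul3_repr u v a (ℛ k h)]
  simp only [LinearMap.comp_apply, LinearEquiv.coe_coe, comm_tmul, TensorProduct.map_tmul,
    mul'_apply, mulLeft_apply]
  refine Finset.sum_congr rfl fun i _ => ?_
  rw [Finset.mul_sum, Finset.sum_mul]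
  refine Finset.sum_congr rfl fun j _ => ?_
  simp only [mul_assoc]

lemma eval_rhs (hmul : ∀ g h : H,
      Coalgebra.comul (R := k) (g * h) = Coalgebra.comul (R := k) g * Coalgebra.comul (R := k) h)
    (a : A) (g h : H) :
    conv2 (u ∘ₗ mul' k H) (mulLeft k a ∘ₗ (v ∘ₗ mul' k H)) (g ⊗ₜ[k] h) =
      smul3 k H u v a (g * h) := by
  have hc : mulLeft k a ∘ₗ (v ∘ₗ mul' k H) = (mulLeft k a ∘ₗ v) ∘ₗ mul' k H := rfl
  rw [hc, conv2_mul hmul]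
  simp only [LinearMap.comp_apply, mul'_apply]
  rw [conv_repr (ℛ k (g * h)) u (mulLeft k a ∘ₗ v), smul3_repr u v a (ℛ k (g * h))]
  refine Finset.sum_congr rfl fun i _ => ?_
  simp only [LinearMap.comp_apply, mulLeft_apply, mul_assoc]

lemma smul3_one (e : H →ₗ[k] A) (huv : conv k u v = e) : smul3 k H u v 1 = e :=
  LinearMap.ext fun x => by
    rw [smul3_repr u v 1 (ℛ k x)]
    simp only [mul_one]
    rw [← conv_repr (ℛ k x) u v, huv]


end H2
end WHAux
end Aux


section Statement

variable (k : Type*) [Field k] (H : Type*) [Ring H] [Algebra k H] [Coalgebra k H]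
  [FiniteDimensional k H] (A : Type*) [Ring A] [Algebra k A]

/-- Theorem 3.5(iii): suppose `f(H) ⊆ Z(A)`.  For the map `h · a = u(h₁) a u⁻¹(h₂)`
associated with an `(e,f)`-invertible `u ∈ Hom(H,A)`, one has `g · (h · a) = (gh) · a`
for all `g, h, a` iff `g · e(h) = e(gh)` for all `g, h` and the map
`t(g,h) = u⁻¹(h₁) u⁻¹(g₁) u(g₂h₂)` takes values in the center of `A`. -/
theorem smul_assoc_iff (S : H →ₗ[k] H) (hH : IsWeakHopf k H S)
    (e f u v : H →ₗ[k] A)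
    (he : conv k e e = e) (hf : conv k f f = f)
    (huv : conv k u v = e) (hvu : conv k v u = f)
    (huf : conv k u f = u) (hfv : conv k f v = v)
    (hfcentral : ∀ h : H, f h ∈ Set.center A) :
    (∀ (g h : H) (a : A),
        smul3 k H u v (smul3 k H u v a h) g = smul3 k H u v a (g * h)) ↔
      ((∀ g h : H, smul3 k H u v (e h) g = e (g * h)) ∧
        ∀ g h : H, tmap k H u v (g ⊗ₜ h) ∈ Set.center A) := by
  have hmul := hH.comul_mul
  have htmap : tmap k H u v = WHAux.conv2
      (mul' k A ∘ₗ TensorProduct.map v v ∘ₗ (TensorProduct.comm k H H).toLinearMap)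
      (u ∘ₗ mul' k H) := rfl
  have hsm1 : smul3 k H u v 1 = e := WHAux.smul3_one u v e huv
  -- convolution identities pulled back to H ⊗ H
  have heu : conv k e u = u := by rw [← huv, WHAux.conv_assoc, hvu, huf]
  have heu2 : WHAux.conv2 (e ∘ₗ mul' k H) (u ∘ₗ mul' k H) = u ∘ₗ mul' k H := by
    rw [WHAux.conv2_mul hmul, heu]
  have heb : e ∘ₗ mul' k H = WHAux.conv2 (u ∘ₗ mul' k H) (v ∘ₗ mul' k H) := by
    rw [WHAux.conv2_mul hmul, huv]
  have hub : WHAux.conv2 (u ∘ₗ mul' k H) (f ∘ₗ mul' k H) = u ∘ₗ mul' k H := by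
    rw [WHAux.conv2_mul hmul, huf]
  have hfb : f ∘ₗ mul' k H = WHAux.conv2 (v ∘ₗ mul' k H) (u ∘ₗ mul' k H) := by
    rw [WHAux.conv2_mul hmul, hvu]
  have hB3 := WHAux.convLG u v f hvu hfcentral
  have hB4 := WHAux.convGffL v f hfv hfcentral
  have hfbc : ∀ x : H ⊗[k] H, (f ∘ₗ mul' k H) x ∈ Set.center A := fun x => hfcentral _
  have hgffc : ∀ x : H ⊗[k] H, (mul' k A ∘ₗ TensorProduct.map f f) x ∈ Set.center A :=
    WHAux.central_ofTmul fun g h => by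
      simp only [LinearMap.comp_apply, TensorProduct.map_tmul, mul'_apply]
      exact Set.mul_mem_center (hfcentral g) (hfcentral h)
  constructor
  · intro hA
    have hA' : ∀ a : A,
        WHAux.conv2 (mul' k A ∘ₗ TensorProduct.map u u)
          (mulLeft k a ∘ₗ (mul' k A ∘ₗ TensorProduct.map v v ∘ₗ
            (TensorProduct.comm k H H).toLinearMap)) =
        WHAux.conv2 (u ∘ₗ mul' k H) (mulLeft k a ∘ₗ (v ∘ₗ mul' k H)) := fun a =>
      TensorProduct.ext' fun g h => by
        rw [WHAux.eval_lhs u v a g h, WHAux.eval_rhs u v hmul a g h]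
        exact hA g h a
    refine ⟨fun g h => ?_, fun g h => ?_⟩
    · have h1 := hA g h 1
      rwa [hsm1] at h1
    · have ht' : ∀ x : H ⊗[k] H, (f ∘ₗ mul' k H) x ∈ Set.center A := hfbc
      refine Semigroup.mem_center_iff.mpr fun a => ?_
      have s1 : mulRight k a ∘ₗ (u ∘ₗ mul' k H) =
          WHAux.conv2 (WHAux.conv2 (mul' k A ∘ₗ TensorProduct.map u u)
            (mulLeft k a ∘ₗ (mul' k A ∘ₗ TensorProduct.map v v ∘ₗ
              (TensorProduct.comm k H H).toLinearMap))) (u ∘ₗ mul' k H) := by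
        calc mulRight k a ∘ₗ (u ∘ₗ mul' k H)
            = mulRight k a ∘ₗ WHAux.conv2 (u ∘ₗ mul' k H) (f ∘ₗ mul' k H) := by rw [hub]
          _ = WHAux.conv2 (u ∘ₗ mul' k H) (mulRight k a ∘ₗ (f ∘ₗ mul' k H)) :=
              (WHAux.conv2_mulRight a _ _).symm
          _ = WHAux.conv2 (u ∘ₗ mul' k H) (mulLeft k a ∘ₗ (f ∘ₗ mul' k H)) := by
              rw [← WHAux.comp_central a hfbc]
          _ = WHAux.conv2 (u ∘ₗ mul' k H)
                (WHAux.conv2 (mulLeft k a ∘ₗ (v ∘ₗ mul' k H)) (u ∘ₗ mul' k H)) := by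
              rw [hfb, ← WHAux.conv2_mulLeft]
          _ = WHAux.conv2 (WHAux.conv2 (u ∘ₗ mul' k H) (mulLeft k a ∘ₗ (v ∘ₗ mul' k H)))
                (u ∘ₗ mul' k H) := (WHAux.conv2_assoc _ _ _).symm
          _ = _ := by rw [hA' a]
      have hkey : mulRight k a ∘ₗ WHAux.conv2
            (mul' k A ∘ₗ TensorProduct.map v v ∘ₗ (TensorProduct.comm k H H).toLinearMap)
            (u ∘ₗ mul' k H) =
          mulLeft k a ∘ₗ WHAux.conv2
            (mul' k A ∘ₗ TensorProduct.map v v ∘ₗ (TensorProduct.comm k H H).toLinearMap)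
            (u ∘ₗ mul' k H) := by
        calc mulRight k a ∘ₗ WHAux.conv2
              (mul' k A ∘ₗ TensorProduct.map v v ∘ₗ (TensorProduct.comm k H H).toLinearMap)
              (u ∘ₗ mul' k H)
            = WHAux.conv2
              (mul' k A ∘ₗ TensorProduct.map v v ∘ₗ (TensorProduct.comm k H H).toLinearMap)
              (mulRight k a ∘ₗ (u ∘ₗ mul' k H)) := (WHAux.conv2_mulRight a _ _).symm
          _ = WHAux.conv2
              (mul' k A ∘ₗ TensorProduct.map v v ∘ₗ (TensorProduct.comm k H H).toLinearMap)
              (WHAux.conv2 (WHAux.conv2 (mul' k A ∘ₗ TensorProduct.map u u)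
                (mulLeft k a ∘ₗ (mul' k A ∘ₗ TensorProduct.map v v ∘ₗ
                  (TensorProduct.comm k H H).toLinearMap))) (u ∘ₗ mul' k H)) := by rw [s1]
          _ = WHAux.conv2 (WHAux.conv2
              (mul' k A ∘ₗ TensorProduct.map v v ∘ₗ (TensorProduct.comm k H H).toLinearMap)
              (WHAux.conv2 (mul' k A ∘ₗ TensorProduct.map u u)
                (mulLeft k a ∘ₗ (mul' k A ∘ₗ TensorProduct.map v v ∘ₗ
                  (TensorProduct.comm k H H).toLinearMap)))) (u ∘ₗ mul' k H) :=
              (WHAux.conv2_assoc _ _ _).symm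
          _ = WHAux.conv2 (WHAux.conv2 (WHAux.conv2
              (mul' k A ∘ₗ TensorProduct.map v v ∘ₗ (TensorProduct.comm k H H).toLinearMap)
              (mul' k A ∘ₗ TensorProduct.map u u))
                (mulLeft k a ∘ₗ (mul' k A ∘ₗ TensorProduct.map v v ∘ₗ
                  (TensorProduct.comm k H H).toLinearMap))) (u ∘ₗ mul' k H) := by
              rw [← WHAux.conv2_assoc]
          _ = WHAux.conv2 (WHAux.conv2 (mul' k A ∘ₗ TensorProduct.map f f)
                (mulLeft k a ∘ₗ (mul' k A ∘ₗ TensorProduct.map v v ∘ₗ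
                  (TensorProduct.comm k H H).toLinearMap))) (u ∘ₗ mul' k H) := by rw [hB3]
          _ = WHAux.conv2 (mulLeft k a ∘ₗ WHAux.conv2 (mul' k A ∘ₗ TensorProduct.map f f)
                (mul' k A ∘ₗ TensorProduct.map v v ∘ₗ
                  (TensorProduct.comm k H H).toLinearMap)) (u ∘ₗ mul' k H) := by
              rw [WHAux.conv2_central a _ hgffc]
          _ = WHAux.conv2 (mulLeft k a ∘ₗ (mul' k A ∘ₗ TensorProduct.map v v ∘ₗ
                (TensorProduct.comm k H H).toLinearMap)) (u ∘ₗ mul' k H) := by rw [hB4]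
          _ = _ := WHAux.conv2_mulLeft a _ _
      have happ := LinearMap.congr_fun hkey (g ⊗ₜ[k] h)
      simp only [LinearMap.comp_apply, mulRight_apply, mulLeft_apply] at happ
      rw [htmap]
      exact happ.symm
  · rintro ⟨hi, htc⟩
    have hi' : WHAux.conv2 (mul' k A ∘ₗ TensorProduct.map u u)
        (mul' k A ∘ₗ TensorProduct.map v v ∘ₗ (TensorProduct.comm k H H).toLinearMap) =
        WHAux.conv2 (u ∘ₗ mul' k H) (v ∘ₗ mul' k H) := by
      apply TensorProduct.ext'; intro g h
      have e1 := WHAux.eval_lhs u v 1 g h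
      have e2 := WHAux.eval_rhs u v hmul 1 g h
      rw [LinearMap.mulLeft_one, LinearMap.id_comp] at e1 e2
      rw [e1, e2, hsm1]
      exact hi g h
    have ht' : ∀ x : H ⊗[k] H, WHAux.conv2
        (mul' k A ∘ₗ TensorProduct.map v v ∘ₗ (TensorProduct.comm k H H).toLinearMap)
        (u ∘ₗ mul' k H) x ∈ Set.center A :=
      WHAux.central_ofTmul fun g h => htmap ▸ htc g h
    intro g h a
    have t1 : WHAux.conv2 (e ∘ₗ mul' k H) (mulRight k a ∘ₗ (u ∘ₗ mul' k H)) =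
        mulRight k a ∘ₗ (u ∘ₗ mul' k H) := by
      rw [WHAux.conv2_mulRight, heu2]
    have hstep : WHAux.conv2
        (mul' k A ∘ₗ TensorProduct.map v v ∘ₗ (TensorProduct.comm k H H).toLinearMap)
        (mulRight k a ∘ₗ (u ∘ₗ mul' k H)) =
        WHAux.conv2 (mulLeft k a ∘ₗ (mul' k A ∘ₗ TensorProduct.map v v ∘ₗ
          (TensorProduct.comm k H H).toLinearMap)) (u ∘ₗ mul' k H) := by
      rw [WHAux.conv2_mulRight, WHAux.conv2_mulLeft, WHAux.comp_central a ht']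
    have key : WHAux.conv2 (u ∘ₗ mul' k H) (mulLeft k a ∘ₗ (v ∘ₗ mul' k H)) =
        WHAux.conv2 (mul' k A ∘ₗ TensorProduct.map u u)
          (mulLeft k a ∘ₗ (mul' k A ∘ₗ TensorProduct.map v v ∘ₗ
            (TensorProduct.comm k H H).toLinearMap)) := by
      calc WHAux.conv2 (u ∘ₗ mul' k H) (mulLeft k a ∘ₗ (v ∘ₗ mul' k H))
          = WHAux.conv2 (mulRight k a ∘ₗ (u ∘ₗ mul' k H)) (v ∘ₗ mul' k H) :=
            (WHAux.conv2_mid a _ _).symm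
        _ = WHAux.conv2 (WHAux.conv2 (e ∘ₗ mul' k H) (mulRight k a ∘ₗ (u ∘ₗ mul' k H)))
              (v ∘ₗ mul' k H) := by rw [t1]
        _ = WHAux.conv2 (e ∘ₗ mul' k H)
              (WHAux.conv2 (mulRight k a ∘ₗ (u ∘ₗ mul' k H)) (v ∘ₗ mul' k H)) :=
            WHAux.conv2_assoc _ _ _
        _ = WHAux.conv2 (WHAux.conv2 (u ∘ₗ mul' k H) (v ∘ₗ mul' k H))
              (WHAux.conv2 (mulRight k a ∘ₗ (u ∘ₗ mul' k H)) (v ∘ₗ mul' k H)) := by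
            rw [heb]
        _ = WHAux.conv2 (WHAux.conv2 (mul' k A ∘ₗ TensorProduct.map u u)
              (mul' k A ∘ₗ TensorProduct.map v v ∘ₗ (TensorProduct.comm k H H).toLinearMap))
              (WHAux.conv2 (mulRight k a ∘ₗ (u ∘ₗ mul' k H)) (v ∘ₗ mul' k H)) := by
            rw [hi']
        _ = WHAux.conv2 (mul' k A ∘ₗ TensorProduct.map u u)
              (WHAux.conv2
                (mul' k A ∘ₗ TensorProduct.map v v ∘ₗ (TensorProduct.comm k H H).toLinearMap)
                (WHAux.conv2 (mulRight k a ∘ₗ (u ∘ₗ mul' k H)) (v ∘ₗ mul' k H))) :=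
            WHAux.conv2_assoc _ _ _
        _ = WHAux.conv2 (mul' k A ∘ₗ TensorProduct.map u u)
              (WHAux.conv2 (WHAux.conv2
                (mul' k A ∘ₗ TensorProduct.map v v ∘ₗ (TensorProduct.comm k H H).toLinearMap)
                (mulRight k a ∘ₗ (u ∘ₗ mul' k H))) (v ∘ₗ mul' k H)) := by
            rw [WHAux.conv2_assoc]
        _ = WHAux.conv2 (mul' k A ∘ₗ TensorProduct.map u u)
              (WHAux.conv2 (WHAux.conv2 (mulLeft k a ∘ₗ (mul' k A ∘ₗ TensorProduct.map v v ∘ₗ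
                (TensorProduct.comm k H H).toLinearMap)) (u ∘ₗ mul' k H)) (v ∘ₗ mul' k H)) := by
            rw [hstep]
        _ = WHAux.conv2 (mul' k A ∘ₗ TensorProduct.map u u)
              (WHAux.conv2 (mulLeft k a ∘ₗ (mul' k A ∘ₗ TensorProduct.map v v ∘ₗ
                (TensorProduct.comm k H H).toLinearMap))
                (WHAux.conv2 (u ∘ₗ mul' k H) (v ∘ₗ mul' k H))) := by
            rw [WHAux.conv2_assoc]
        _ = WHAux.conv2 (mul' k A ∘ₗ TensorProduct.map u u)
              (WHAux.conv2 (mulLeft k a ∘ₗ (mul' k A ∘ₗ TensorProduct.map v v ∘ₗ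
                (TensorProduct.comm k H H).toLinearMap))
                (WHAux.conv2 (mul' k A ∘ₗ TensorProduct.map u u)
                  (mul' k A ∘ₗ TensorProduct.map v v ∘ₗ
                    (TensorProduct.comm k H H).toLinearMap))) := by
            rw [← hi']
        _ = WHAux.conv2 (mul' k A ∘ₗ TensorProduct.map u u)
              (mulLeft k a ∘ₗ WHAux.conv2
                (mul' k A ∘ₗ TensorProduct.map v v ∘ₗ (TensorProduct.comm k H H).toLinearMap)
                (WHAux.conv2 (mul' k A ∘ₗ TensorProduct.map u u)
                  (mul' k A ∘ₗ TensorProduct.map v v ∘ₗ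
                    (TensorProduct.comm k H H).toLinearMap))) := by
            rw [WHAux.conv2_mulLeft]
        _ = WHAux.conv2 (mul' k A ∘ₗ TensorProduct.map u u)
              (mulLeft k a ∘ₗ (mul' k A ∘ₗ TensorProduct.map v v ∘ₗ
                (TensorProduct.comm k H H).toLinearMap)) := by
            rw [← WHAux.conv2_assoc, hB3, hB4]
    rw [← WHAux.eval_lhs u v a g h, ← WHAux.eval_rhs u v hmul a g h]
    exact (LinearMap.congr_fun key (g ⊗ₜ[k] h)).symm

end Statement
end
end

section
/- Let H be a weak Hopf algebra, A an algebra, u ∈ Hom(H,A) an (e,f)-invertible element with u(H_s) ⊆ Z(A) and e(1_H) = 1_A. Then 1_H · a = a for all a ∈ A, where h · a = u(h₁) a u⁻¹(h₂). -/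
open TensorProduct LinearMap

noncomputable section

section Statement

variable (k : Type*) [Field k] (H : Type*) [Ring H] [Algebra k H] [Coalgebra k H]
  [FiniteDimensional k H] (A : Type*) [Ring A] [Algebra k A]

set_option maxHeartbeats 1000000 in
set_option synthInstance.maxHeartbeats 1000000 in
/-- Theorem 3.5(iv): if `u(H_s) ⊆ Z(A)` and `e(1) = 1`, then `1 · a = a` for all
`a ∈ A`, where `h · a = u(h₁) a u⁻¹(h₂)` for an `(e,f)`-invertible `u ∈ Hom(H,A)`. -/
theorem one_smul_of_central (S : H →ₗ[k] H) (hH : IsWeakHopf k H S)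
    (e f u v : H →ₗ[k] A)
    (he : conv k e e = e) (hf : conv k f f = f)
    (huv : conv k u v = e) (hvu : conv k v u = f)
    (huf : conv k u f = u) (hfv : conv k f v = v)
    (hus : ∀ h : H, epsS k H h = h → u h ∈ Set.center A)
    (he1 : e 1 = 1) :
    ∀ a : A, smul3 k H u v a 1 = a := by
  classical
  intro a
  obtain ⟨s, hs⟩ := TensorProduct.exists_finset (Coalgebra.comul (R := k) (1 : H))
  -- formula for epsS in terms of the chosen representation of `comul 1`
  have hepsS : ∀ h : H,
      epsS k H h = ∑ p ∈ s, Coalgebra.counit (R := k) (h * p.2) • p.1 := by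
    intro h
    simp only [epsS, LinearMap.comp_apply, TensorProduct.mk_apply,
      LinearMap.mulRight_apply, hs, Finset.mul_sum, map_sum]
    refine Finset.sum_congr rfl fun p _ => ?_
    simp [Algebra.TensorProduct.tmul_mul_tmul]
  -- pointwise counit law
  have hcu : ∀ x : H, (TensorProduct.rid k H)
      (TensorProduct.map LinearMap.id Coalgebra.counit (Coalgebra.comul (R := k) x)) = x := by
    intro x
    have hx : TensorProduct.map (LinearMap.id) (Coalgebra.counit)
        (Coalgebra.comul (R := k) x) = x ⊗ₜ[k] (1 : k) :=
      Coalgebra.lTensor_counit_comul x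
    rw [hx]; simp
  -- the key identity: (εₛ ⊗ id) Δ(1) = Δ(1)
  have hkey : (∑ p ∈ s, epsS k H p.1 ⊗ₜ[k] p.2) = Coalgebra.comul (R := k) (1 : H) := by
    set L : (H ⊗[k] H) ⊗[k] H →ₗ[k] H ⊗[k] H :=
      TensorProduct.map ((TensorProduct.rid k H).toLinearMap ∘ₗ
        TensorProduct.map LinearMap.id Coalgebra.counit) LinearMap.id with hL
    have h1 := congrArg L hH.comul_one_right
    have hLHS : L (TensorProduct.map (Coalgebra.comul (R := k)) LinearMap.id
        (Coalgebra.comul (R := k) (1 : H))) = Coalgebra.comul (R := k) (1 : H) := by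
      conv_lhs => rw [hs]
      rw [map_sum, map_sum]
      conv_rhs => rw [hs]
      refine Finset.sum_congr rfl fun p _ => ?_
      simp [hL, hcu p.1]
    have hRHS : L (((TensorProduct.assoc k H H H).symm
          ((1 : H) ⊗ₜ Coalgebra.comul (R := k) (1 : H))) *
        (Coalgebra.comul (R := k) (1 : H) ⊗ₜ (1 : H)))
        = ∑ p ∈ s, ∑ q ∈ s,
            (Coalgebra.counit (R := k) (p.1 * q.2) • q.1) ⊗ₜ[k] p.2 := by
      conv_lhs => rw [hs]
      rw [TensorProduct.tmul_sum, TensorProduct.sum_tmul, map_sum, Finset.sum_mul_sum, map_sum]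
      refine Finset.sum_congr rfl fun p _ => ?_
      rw [map_sum]
      refine Finset.sum_congr rfl fun q _ => ?_
      rw [TensorProduct.assoc_symm_tmul]
      rw [Algebra.TensorProduct.tmul_mul_tmul, Algebra.TensorProduct.tmul_mul_tmul]
      simp [hL, one_mul, mul_one, TensorProduct.smul_tmul']
    rw [hLHS, hRHS] at h1
    rw [h1]
    refine Finset.sum_congr rfl fun p _ => ?_
    rw [hepsS p.1, TensorProduct.sum_tmul]
  -- εₛ is idempotent
  have hid : ∀ h : H, epsS k H (epsS k H h) = epsS k H h := by
    intro h
    set G : H ⊗[k] H →ₗ[k] H := (TensorProduct.rid k H).toLinearMap ∘ₗ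
      TensorProduct.map LinearMap.id (Coalgebra.counit ∘ₗ LinearMap.mulLeft k h) with hG
    have h2 := congrArg G hkey
    rw [map_sum] at h2
    have hGl : ∀ x y : H, G (x ⊗ₜ[k] y) = Coalgebra.counit (R := k) (h * y) • x := by
      intro x y; simp [hG]
    calc epsS k H (epsS k H h)
        = ∑ p ∈ s, Coalgebra.counit (R := k) (h * p.2) • epsS k H p.1 := by
          rw [hepsS h, map_sum]; simp
      _ = G (Coalgebra.comul (R := k) (1 : H)) := by
          rw [← h2]; exact Finset.sum_congr rfl fun p _ => (hGl _ _).symm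
      _ = ∑ p ∈ s, Coalgebra.counit (R := k) (h * p.2) • p.1 := by
          rw [hs, map_sum]; exact Finset.sum_congr rfl fun p _ => hGl _ _
      _ = epsS k H h := (hepsS h).symm
  -- the action map applied, in terms of the representation
  set Φ : H ⊗[k] H →ₗ[k] A :=
    TensorProduct.lift ((LinearMap.mul k A ∘ₗ LinearMap.mulRight k a ∘ₗ u).compl₂ v) with hΦ
  have hΦl : ∀ x y : H, Φ (x ⊗ₜ[k] y) = u x * a * v y := by
    intro x y; simp [hΦ, LinearMap.mul_apply']
  have hsm : smul3 k H u v a 1 = ∑ p ∈ s, u p.1 * a * v p.2 := by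
    simp only [smul3, LinearMap.comp_apply]
    rw [hs, map_sum]
    exact Finset.sum_congr rfl fun p _ => hΦl p.1 p.2
  -- replace p.1 by εₛ(p.1) using hkey
  have hrepl : ∑ p ∈ s, u p.1 * a * v p.2 = ∑ p ∈ s, u (epsS k H p.1) * a * v p.2 := by
    have h3 := congrArg Φ hkey
    rw [map_sum] at h3
    calc ∑ p ∈ s, u p.1 * a * v p.2
        = Φ (Coalgebra.comul (R := k) (1 : H)) := by
          rw [hs, map_sum]; exact Finset.sum_congr rfl fun p _ => (hΦl _ _).symm
      _ = ∑ p ∈ s, Φ (epsS k H p.1 ⊗ₜ[k] p.2) := h3.symm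
      _ = ∑ p ∈ s, u (epsS k H p.1) * a * v p.2 :=
          Finset.sum_congr rfl fun p _ => hΦl _ _
  -- u(εₛ(h)) is central
  have hcen : ∀ h : H, ∀ b : A, u (epsS k H h) * b = b * u (epsS k H h) := by
    intro h b
    exact (Set.mem_center_iff.mp (hus (epsS k H h) (hid h))).comm b
  -- convolution identity at 1
  have hΨ : ∀ (T : H ⊗[k] H),
      (LinearMap.mul' k A) (TensorProduct.map u v T) = (LinearMap.mul' k A ∘ₗ
        TensorProduct.map u v) T := fun T => rfl
  have hconv1 : ∑ p ∈ s, u p.1 * v p.2 = 1 := by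
    have h4 := congrArg (fun φ : H →ₗ[k] A => φ (1 : H)) huv
    simp only [conv, LinearMap.comp_apply] at h4
    rw [hs, map_sum, map_sum] at h4
    rw [he1] at h4
    rw [← h4]
    exact Finset.sum_congr rfl fun p _ => by simp
  have hconv2 : ∑ p ∈ s, u (epsS k H p.1) * v p.2 = 1 := by
    have h5 := congrArg (LinearMap.mul' k A ∘ₗ TensorProduct.map u v) hkey
    rw [map_sum] at h5
    calc ∑ p ∈ s, u (epsS k H p.1) * v p.2
        = ∑ p ∈ s, (LinearMap.mul' k A ∘ₗ TensorProduct.map u v)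
            (epsS k H p.1 ⊗ₜ[k] p.2) := Finset.sum_congr rfl fun p _ => by simp
      _ = (LinearMap.mul' k A ∘ₗ TensorProduct.map u v)
            (Coalgebra.comul (R := k) (1 : H)) := h5
      _ = ∑ p ∈ s, u p.1 * v p.2 := by
          rw [hs, map_sum]; exact Finset.sum_congr rfl fun p _ => by simp
      _ = 1 := hconv1
  calc smul3 k H u v a 1
      = ∑ p ∈ s, u (epsS k H p.1) * a * v p.2 := by rw [hsm, hrepl]
    _ = ∑ p ∈ s, a * (u (epsS k H p.1) * v p.2) := by
        refine Finset.sum_congr rfl fun p _ => ?_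
        rw [hcen p.1 a, mul_assoc]
    _ = a * ∑ p ∈ s, u (epsS k H p.1) * v p.2 := by rw [Finset.mul_sum]
    _ = a := by rw [hconv2, mul_one]

end Statement
end
end

section
/- Let H be a weak Hopf algebra, A an algebra, u ∈ Hom(H,A) an (e,f)-invertible element with convolution inverse u⁻¹, and suppose the element λ(1) = u(1₁) ⊗ u⁻¹(1₂) ∈ A ⊗ A satisfies (s ⊗ 1)λ(1) = λ(1)(1 ⊗ s) for all s ∈ u(H_s). If 1_H · a = a for all a ∈ A (where h · a = u(h₁)au⁻¹(h₂)), then e(1_H) = 1_A and u(H_s) ⊆ Z(A). -/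
open TensorProduct LinearMap

noncomputable section

section Statement

variable (k : Type*) [Field k] (H : Type*) [Ring H] [Algebra k H] [Coalgebra k H]
  [FiniteDimensional k H] (A : Type*) [Ring A] [Algebra k A]

/-- `h ↦ u(h₁) a v(h₂)` rewritten through `TensorProduct.map u v`. -/
lemma smul3_eq_s15 (u v : H →ₗ[k] A) (a : A) (x : H ⊗[k] H) :
    TensorProduct.lift ((LinearMap.mul k A ∘ₗ LinearMap.mulRight k a ∘ₗ u).compl₂ v) x =
      (LinearMap.mul' k A ∘ₗ TensorProduct.map (LinearMap.mulRight k a) LinearMap.id)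
        (TensorProduct.map u v x) := by
  induction x using TensorProduct.induction_on with
  | zero => simp
  | tmul x y => simp
  | add x y hx hy => simp [hx, hy]

lemma mulmap_left (s a : A) (x : A ⊗[k] A) :
    (LinearMap.mul' k A ∘ₗ TensorProduct.map (LinearMap.mulRight k a) LinearMap.id)
        ((s ⊗ₜ (1 : A)) * x) =
      s * (LinearMap.mul' k A ∘ₗ TensorProduct.map (LinearMap.mulRight k a) LinearMap.id) x := by
  induction x using TensorProduct.induction_on with
  | zero => simp
  | tmul x y => simp [Algebra.TensorProduct.tmul_mul_tmul, mul_assoc]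
  | add x y hx hy =>
      simp only [LinearMap.comp_apply] at hx hy
      simp [mul_add, hx, hy]

lemma mulmap_right (s a : A) (x : A ⊗[k] A) :
    (LinearMap.mul' k A ∘ₗ TensorProduct.map (LinearMap.mulRight k a) LinearMap.id)
        (x * ((1 : A) ⊗ₜ s)) =
      (LinearMap.mul' k A ∘ₗ TensorProduct.map (LinearMap.mulRight k a) LinearMap.id) x * s := by
  induction x using TensorProduct.induction_on with
  | zero => simp
  | tmul x y => simp [Algebra.TensorProduct.tmul_mul_tmul, mul_assoc]
  | add x y hx hy =>
      simp only [LinearMap.comp_apply] at hx hy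
      simp [add_mul, hx, hy]

lemma mulmap_one (x : A ⊗[k] A) :
    (LinearMap.mul' k A ∘ₗ TensorProduct.map (LinearMap.mulRight k (1 : A)) LinearMap.id) x =
      LinearMap.mul' k A x := by
  induction x using TensorProduct.induction_on with
  | zero => simp
  | tmul x y => simp
  | add x y hx hy => simp [hx, hy]

/-- Theorem 3.5(v): if `λ(1) = u(1₁) ⊗ u⁻¹(1₂)` is `u(H_s)`-central in `A ⊗ A` and
`1 · a = a` for all `a` (where `h · a = u(h₁) a u⁻¹(h₂)`), then `e(1) = 1` and
`u(H_s) ⊆ Z(A)`. -/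
theorem central_of_one_smul (S : H →ₗ[k] H) (hH : IsWeakHopf k H S)
    (e f u v : H →ₗ[k] A)
    (he : conv k e e = e) (hf : conv k f f = f)
    (huv : conv k u v = e) (hvu : conv k v u = f)
    (huf : conv k u f = u) (hfv : conv k f v = v)
    (hlambda : ∀ s : A, (∃ h : H, epsS k H h = h ∧ u h = s) →
      (s ⊗ₜ (1 : A)) * (TensorProduct.map u v (Coalgebra.comul (R := k) (1 : H))) =
        (TensorProduct.map u v (Coalgebra.comul (R := k) (1 : H))) * ((1 : A) ⊗ₜ s))
    (hone : ∀ a : A, smul3 k H u v a 1 = a) :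
    e 1 = 1 ∧ ∀ h : H, epsS k H h = h → u h ∈ Set.center A := by
  have key : ∀ a : A,
      (LinearMap.mul' k A ∘ₗ TensorProduct.map (LinearMap.mulRight k a) LinearMap.id)
        (TensorProduct.map u v (Coalgebra.comul (R := k) (1 : H))) = a := by
    intro a
    have := hone a
    rw [smul3, LinearMap.comp_apply, smul3_eq_s15] at this
    exact this
  constructor
  · rw [← huv]
    have := key 1
    rw [mulmap_one] at this
    simpa [conv] using this
  · intro h hh
    rw [Semigroup.mem_center_iff]
    intro a
    have hl := hlambda (u h) ⟨h, hh, rfl⟩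
    calc a * u h
        = (LinearMap.mul' k A ∘ₗ TensorProduct.map (LinearMap.mulRight k a) LinearMap.id)
            (TensorProduct.map u v (Coalgebra.comul (R := k) (1 : H))) * u h := by rw [key]
      _ = (LinearMap.mul' k A ∘ₗ TensorProduct.map (LinearMap.mulRight k a) LinearMap.id)
            (TensorProduct.map u v (Coalgebra.comul (R := k) (1 : H)) *
              ((1 : A) ⊗ₜ u h)) := by rw [mulmap_right]
      _ = (LinearMap.mul' k A ∘ₗ TensorProduct.map (LinearMap.mulRight k a) LinearMap.id)
            ((u h ⊗ₜ (1 : A)) *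
              TensorProduct.map u v (Coalgebra.comul (R := k) (1 : H))) := by rw [hl]
      _ = u h * (LinearMap.mul' k A ∘ₗ TensorProduct.map (LinearMap.mulRight k a) LinearMap.id)
            (TensorProduct.map u v (Coalgebra.comul (R := k) (1 : H))) := by rw [mulmap_left]
      _ = u h * a := by rw [key]

end Statement
end
end

section
/- A weak Hopf algebra H is quantum commutative (i.e., h₁ g ε_s(h₂) = hg for all g, h ∈ H) if and only if the source counital subalgebra H_s is contained in the center of H. -/
open TensorProduct LinearMap

set_option maxHeartbeats 1000000
set_option synthInstance.maxHeartbeats 1000000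

noncomputable section

section Aux

variable {k : Type*} [CommRing k] {H : Type*} [Ring H] [Algebra k H] [Coalgebra k H]

/-- The contraction `a ⊗ b ↦ ε(h b) • a`. -/
def crh (k : Type*) {H : Type*} [CommRing k] [Ring H] [Algebra k H] [Coalgebra k H] (h : H) :
    H ⊗[k] H →ₗ[k] H :=
  (TensorProduct.rid k H).toLinearMap ∘ₗ
    TensorProduct.map LinearMap.id (Coalgebra.counit ∘ₗ LinearMap.mulLeft k h)

@[simp] lemma crh_tmul (h a b : H) :
    crh k h (a ⊗ₜ[k] b) = Coalgebra.counit (R := k) (h * b) • a := by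
  simp [crh]

lemma crh_one_comul (h : H) : crh k (1 : H) (Coalgebra.comul (R := k) h) = h := by
  have h1 : crh k (1 : H) (Coalgebra.comul (R := k) h) =
      (TensorProduct.rid k H) (LinearMap.lTensor H (Coalgebra.counit (R := k))
        (Coalgebra.comul (R := k) h)) := by
    rw [crh, LinearMap.mulLeft_one, LinearMap.comp_id]
    rfl
  rw [h1, Coalgebra.lTensor_counit_comul, TensorProduct.rid_tmul, one_smul]

lemma crh_one_comp :
    crh k (1 : H) ∘ₗ (Coalgebra.comul (R := k) (A := H)) = LinearMap.id :=
  LinearMap.ext fun h => crh_one_comul h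

lemma rid_map_mul (h : H) (t : H ⊗[k] H) :
    (TensorProduct.rid k H) (TensorProduct.map LinearMap.id (Coalgebra.counit (R := k))
      (((1 : H) ⊗ₜ[k] h) * t)) = crh k h t := by
  induction t with
  | zero => simp
  | tmul a b => simp [Algebra.TensorProduct.tmul_mul_tmul]
  | add x y hx hy => rw [mul_add, map_add, map_add, map_add, hx, hy]

lemma epsS_apply (h : H) : epsS k H h = crh k h (Coalgebra.comul (R := k) (1 : H)) := by
  rw [epsS]
  simp only [LinearMap.coe_comp, Function.comp_apply, LinearEquiv.coe_coe,
    TensorProduct.mk_apply, LinearMap.mulRight_apply]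
  exact rid_map_mul h _

lemma crh_one_mul (c : H) (t : H ⊗[k] H) :
    crh k (1 : H) (((1 : H) ⊗ₜ[k] c) * t) = crh k c t := by
  induction t with
  | zero => simp
  | tmul a b => simp [Algebra.TensorProduct.tmul_mul_tmul, one_mul]
  | add x y hx hy => rw [mul_add, map_add, map_add, hx, hy]

lemma mul_crh (a b : H) (t : H ⊗[k] H) :
    a * crh k b t = crh k (1 : H) ((a ⊗ₜ[k] b) * t) := by
  induction t with
  | zero => simp
  | tmul c d => simp [Algebra.TensorProduct.tmul_mul_tmul, mul_smul_comm, one_mul]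
  | add x y hx hy => rw [mul_add, map_add, map_add, mul_add, hx, hy]

/-- The contraction `x ⊗ b ↦ ε(h b) • x` on `(H ⊗ H) ⊗ H`. -/
def cr2h (k : Type*) {H : Type*} [CommRing k] [Ring H] [Algebra k H] [Coalgebra k H] (h : H) :
    (H ⊗[k] H) ⊗[k] H →ₗ[k] H ⊗[k] H :=
  (TensorProduct.rid k (H ⊗[k] H)).toLinearMap ∘ₗ
    TensorProduct.map LinearMap.id (Coalgebra.counit ∘ₗ LinearMap.mulLeft k h)

@[simp] lemma cr2h_tmul (h : H) (x : H ⊗[k] H) (b : H) :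
    cr2h k h (x ⊗ₜ[k] b) = Coalgebra.counit (R := k) (h * b) • x := by
  simp [cr2h]

lemma cr2h_map_comul (h : H) :
    cr2h k h ∘ₗ TensorProduct.map (Coalgebra.comul (R := k) (A := H)) LinearMap.id =
      (Coalgebra.comul (R := k) (A := H)) ∘ₗ crh k h := by
  apply TensorProduct.ext'
  intro a b
  simp [map_smul]

lemma cr2h_prod (h : H) (t u : H ⊗[k] H) :
    cr2h k h ((t ⊗ₜ[k] (1 : H)) * ((TensorProduct.assoc k H H H).symm ((1 : H) ⊗ₜ[k] u))) =
      t * ((1 : H) ⊗ₜ[k] crh k h u) := by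
  induction u with
  | zero => simp
  | tmul c d =>
    induction t with
    | zero => simp
    | tmul a b =>
      simp [TensorProduct.assoc_symm_tmul, Algebra.TensorProduct.tmul_mul_tmul,
        TensorProduct.tmul_smul, mul_smul_comm, TensorProduct.smul_tmul']
    | add x y hx hy =>
      rw [TensorProduct.add_tmul, add_mul, map_add, hx, hy, add_mul]
  | add x y hx hy =>
    rw [TensorProduct.tmul_add, map_add, map_add, mul_add,
      map_add, hx, hy, TensorProduct.tmul_add, mul_add]

section WithS

variable {S : H →ₗ[k] H} (hH : IsWeakHopf k H S)
include hH

/-- `Δ(ε_s(h)) = Δ(1)(1 ⊗ ε_s(h))`. -/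
lemma comul_epsS (h : H) :
    Coalgebra.comul (R := k) (epsS k H h) =
      Coalgebra.comul (R := k) (1 : H) * ((1 : H) ⊗ₜ[k] epsS k H h) := by
  have h1 := congrArg (cr2h k h) hH.comul_one_left
  rw [← LinearMap.comp_apply, cr2h_map_comul, LinearMap.comp_apply, cr2h_prod] at h1
  rw [epsS_apply]
  exact h1

/-- `(ε_s ⊗ id)(Δ(1)) = Δ(1)`. -/
lemma map_epsS_comul_one :
    TensorProduct.map (epsS k H) LinearMap.id (Coalgebra.comul (R := k) (1 : H)) =
      Coalgebra.comul (R := k) (1 : H) := by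
  have h1 := congrArg (TensorProduct.map (crh k (1 : H)) (LinearMap.id (R := k) (M := H)))
    hH.comul_one_right
  rw [← LinearMap.comp_apply, ← TensorProduct.map_comp, crh_one_comp,
    LinearMap.comp_id, TensorProduct.map_id, LinearMap.id_apply] at h1
  -- now compute the right hand side
  have h2 : ∀ u : H ⊗[k] H,
      (TensorProduct.map (crh k (1 : H)) LinearMap.id)
        (((TensorProduct.assoc k H H H).symm ((1 : H) ⊗ₜ[k] u)) *
          ((Coalgebra.comul (R := k) (1 : H)) ⊗ₜ[k] (1 : H))) =
        TensorProduct.map (epsS k H) LinearMap.id u := by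
    intro u
    induction u with
    | zero => simp
    | tmul c d =>
      rw [TensorProduct.assoc_symm_tmul, Algebra.TensorProduct.tmul_mul_tmul, mul_one,
        TensorProduct.map_tmul, crh_one_mul, TensorProduct.map_tmul, epsS_apply]
    | add x y hx hy =>
      rw [TensorProduct.tmul_add, map_add, add_mul, map_add, hx, hy]
      exact (map_add _ x y).symm
  rw [h2] at h1
  exact h1.symm

lemma epsS_idem (h : H) : epsS k H (epsS k H h) = epsS k H h := by
  have h1 := congrArg (crh k h) (map_epsS_comul_one hH)
  have h2 : ∀ t : H ⊗[k] H,
      crh k h (TensorProduct.map (epsS k H) LinearMap.id t) = epsS k H (crh k h t) := by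
    intro t
    induction t with
    | zero => simp
    | tmul a b => simp [map_smul]
    | add x y hx hy => rw [map_add, map_add, map_add, hx, hy, map_add]
  rw [h2] at h1
  rw [← epsS_apply] at h1
  exact h1

lemma antipode_eps (h : H) :
    LinearMap.mul' k H (TensorProduct.map S LinearMap.id (Coalgebra.comul (R := k) h)) =
      epsS k H h := by
  have := LinearMap.congr_fun hH.conv_antipode_id h
  simpa [conv] using this

omit hH in
lemma mulS_right (z : H) (t : H ⊗[k] H) :
    LinearMap.mul' k H (TensorProduct.map S LinearMap.id (t * ((1 : H) ⊗ₜ[k] z))) =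
      LinearMap.mul' k H (TensorProduct.map S LinearMap.id t) * z := by
  induction t with
  | zero => simp
  | tmul a b => simp [Algebra.TensorProduct.tmul_mul_tmul, LinearMap.mul'_apply, mul_assoc]
  | add x y hx hy => rw [add_mul, map_add, map_add, map_add, map_add, hx, hy, add_mul]

lemma epsS_mul_right {z : H} (hz : epsS k H z = z) (w : H) :
    epsS k H (w * z) = epsS k H w * z := by
  have hcz : Coalgebra.comul (R := k) (w * z) =
      Coalgebra.comul (R := k) w * ((1 : H) ⊗ₜ[k] z) := by
    have hz2 : Coalgebra.comul (R := k) z =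
        Coalgebra.comul (R := k) (1 : H) * ((1 : H) ⊗ₜ[k] z) := by
      have := comul_epsS hH z
      rwa [hz] at this
    rw [hH.comul_mul, hz2, ← mul_assoc, ← hH.comul_mul, mul_one]
  rw [← antipode_eps hH, hcz, mulS_right, antipode_eps hH]

omit hH in
lemma smul3_rep {ι : Type*} (g h : H) {s : Finset ι} {f₁ f₂ : ι → H}
    (hs : Coalgebra.comul (R := k) h = ∑ q ∈ s, f₁ q ⊗ₜ[k] f₂ q) :
    smul3 k H LinearMap.id (epsS k H) g h = ∑ q ∈ s, f₁ q * g * epsS k H (f₂ q) := by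
  rw [smul3, LinearMap.comp_apply, hs, map_sum]
  refine Finset.sum_congr rfl fun q _ => ?_
  simp

lemma sum_mul_epsS {ι : Type*} (h : H) {s : Finset ι} {f₁ f₂ : ι → H}
    (hs : Coalgebra.comul (R := k) h = ∑ q ∈ s, f₁ q ⊗ₜ[k] f₂ q) :
    ∑ q ∈ s, f₁ q * epsS k H (f₂ q) = h := by
  have e1 : ∀ t : H ⊗[k] H,
      LinearMap.mul' k H (TensorProduct.map LinearMap.id (epsS k H) t) =
        crh k (1 : H) (t * Coalgebra.comul (R := k) (1 : H)) := by
    intro t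
    induction t with
    | zero => simp
    | tmul a b =>
      rw [TensorProduct.map_tmul, LinearMap.id_apply, LinearMap.mul'_apply, epsS_apply,
        mul_crh]
    | add x y hx hy => rw [map_add, map_add, hx, hy, add_mul, map_add]
  calc ∑ q ∈ s, f₁ q * epsS k H (f₂ q)
      = LinearMap.mul' k H (TensorProduct.map LinearMap.id (epsS k H)
          (Coalgebra.comul (R := k) h)) := by rw [hs, map_sum, map_sum]; simp
    _ = crh k (1 : H) (Coalgebra.comul (R := k) h * Coalgebra.comul (R := k) (1 : H)) := e1 _
    _ = crh k (1 : H) (Coalgebra.comul (R := k) h) := by rw [← hH.comul_mul, mul_one]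
    _ = h := crh_one_comul h

end WithS

end Aux

section Statement

variable (k : Type*) [Field k] (H : Type*) [Ring H] [Algebra k H] [Coalgebra k H]
  [FiniteDimensional k H]

/-- Proposition 4.1: a weak Hopf algebra `H` is quantum commutative, i.e.
`h₁ g ε_s(h₂) = h g` for all `g, h ∈ H`, if and only if the source counital
subalgebra `H_s` is contained in the center of `H`. -/
theorem quantum_commutative_iff (S : H →ₗ[k] H) (hH : IsWeakHopf k H S) :
    (∀ h g : H, smul3 k H LinearMap.id (epsS k H) g h = h * g) ↔
      (∀ x : H, epsS k H x = x → x ∈ Set.center H) := by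
  constructor
  · intro hqc x hx
    rw [Semigroup.mem_center_iff]
    intro g
    obtain ⟨s, hs⟩ := TensorProduct.exists_finset (Coalgebra.comul (R := k) (1 : H))
    have hx' : Coalgebra.comul (R := k) x = ∑ p ∈ s, p.1 ⊗ₜ[k] (p.2 * x) := by
      have h0 := comul_epsS hH x
      rw [hx] at h0
      rw [h0, hs, Finset.sum_mul]
      refine Finset.sum_congr rfl fun p _ => ?_
      rw [Algebra.TensorProduct.tmul_mul_tmul, mul_one]
    have h1 := hqc x g
    rw [smul3_rep g x hx'] at h1
    have h2 : ∀ p ∈ s, p.1 * g * epsS k H (p.2 * x) = p.1 * g * epsS k H p.2 * x := by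
      intro p _
      rw [epsS_mul_right hH hx, ← mul_assoc]
    rw [Finset.sum_congr rfl h2, ← Finset.sum_mul] at h1
    have h3 := hqc 1 g
    rw [smul3_rep g 1 hs, one_mul] at h3
    rw [h3] at h1
    exact h1
  · intro hc h g
    obtain ⟨s, hs⟩ := TensorProduct.exists_finset (Coalgebra.comul (R := k) h)
    have hs' : Coalgebra.comul (R := k) h = ∑ q ∈ s, q.1 ⊗ₜ[k] q.2 := hs
    rw [smul3_rep g h hs']
    have h2 : ∀ q ∈ s, q.1 * g * epsS k H q.2 = q.1 * epsS k H q.2 * g := by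
      intro q _
      have hcent := hc (epsS k H q.2) (epsS_idem hH q.2)
      rw [Semigroup.mem_center_iff] at hcent
      rw [mul_assoc, hcent g, ← mul_assoc]
    rw [Finset.sum_congr rfl h2, ← Finset.sum_mul, sum_mul_epsS hH h hs']

end Statement
end
end
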